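/- Let F: R^n → R be convex with L-Lipschitz gradient, S symmetric positive definite with minimum eigenvalue λ_min(S), and 0 < s ≤ 2λ_min(S)/L. Then the operator x ↦ x − s S^{-1}∇F(x) is non-expansive with respect to ||·||_S: for all u, v, ||(u − v) − s S^{-1}(∇F(u) − ∇F(v))||_S ≤ ||u − v||_S. -/

import Mathlib

open RealInnerProductSpace

section aux

variable {E : Type*} [NormedAddCommGroup E] [InnerProductSpace ℝ E] [CompleteSpace E]

lemma aux_line_deriv {F : E → ℝ} {F' : E → E} (hgrad : ∀ x, HasGradientAt F (F' x) x)
    (x d : E) (t : ℝ) :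
    HasDerivAt (fun t : ℝ => F (x + t • d)) ⟪F' (x + t • d), d⟫ t := by
  have hc : HasDerivAt (fun t : ℝ => x + t • d) d t := by
    simpa using ((hasDerivAt_id t).smul_const d).const_add x
  have hF : HasFDerivAt F (InnerProductSpace.toDual ℝ E (F' (x + t • d))) (x + t • d) :=
    hgrad _
  have h := hF.comp_hasDerivAt t hc
  simp at h
  exact h

/-- Convexity lower bound: `F x + ⟪F' x, y - x⟫ ≤ F y`. -/
lemma aux_convex_lb {F : E → ℝ} {F' : E → E} (hconv : ConvexOn ℝ Set.univ F)
    (hgrad : ∀ x, HasGradientAt F (F' x) x) (x y : E) :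
    F x + ⟪F' x, y - x⟫ ≤ F y := by
  set g : ℝ → ℝ := fun t => F (x + t • (y - x)) with hg
  have hg0 : g 0 = F x := by simp [hg]
  have hg1 : g 1 = F y := by simp [hg]
  have hderiv : HasDerivAt g ⟪F' x, y - x⟫ 0 := by
    have := aux_line_deriv hgrad x (y - x) 0
    simpa using this
  have hslope : Filter.Tendsto (slope g 0) (nhdsWithin 0 (Set.Ioi 0)) (nhds ⟪F' x, y - x⟫) :=
    (hasDerivAt_iff_tendsto_slope.mp hderiv).mono_left
      (nhdsWithin_mono _ (fun t ht => ne_of_gt ht))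
  have hev : ∀ᶠ t in nhdsWithin (0:ℝ) (Set.Ioi 0), slope g 0 t ≤ F y - F x := by
    have hmem : Set.Ioc (0:ℝ) 1 ∈ nhdsWithin (0:ℝ) (Set.Ioi 0) := by
      rw [show Set.Ioc (0:ℝ) 1 = Set.Ioi 0 ∩ Set.Iic 1 from rfl]
      exact Filter.inter_mem self_mem_nhdsWithin
        (mem_nhdsWithin_of_mem_nhds (Iic_mem_nhds one_pos))
    filter_upwards [hmem] with t ht
    have h01 : g t ≤ (1 - t) * F x + t * F y := by
      have hx : x + t • (y - x) = (1 - t) • x + t • y := by module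
      have := hconv.2 (Set.mem_univ x) (Set.mem_univ y)
        (by linarith [ht.2] : (0:ℝ) ≤ 1 - t) (le_of_lt ht.1) (by ring)
      rw [hg]; dsimp only; rw [hx]
      simpa using this
    have ht0 : 0 < t := ht.1
    simp only [slope_def_field, sub_zero]
    rw [div_le_iff₀ ht0]
    nlinarith [hg0]
  have := le_of_tendsto hslope hev
  linarith [this]

/-- Descent lemma: `F y ≤ F x + ⟪F' x, y - x⟫ + L/2 ‖y - x‖²`. -/
lemma aux_descent {F : E → ℝ} {F' : E → E} (hgrad : ∀ x, HasGradientAt F (F' x) x)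
    {L : ℝ} (hL : 0 < L) (hlip : ∀ u v, ‖F' u - F' v‖ ≤ L * ‖u - v‖) (x y : E) :
    F y ≤ F x + ⟪F' x, y - x⟫ + L / 2 * ‖y - x‖ ^ 2 := by
  set d := y - x with hd
  set g : ℝ → ℝ := fun t => F (x + t • d) with hg
  set g' : ℝ → ℝ := fun t => ⟪F' (x + t • d), d⟫ with hg'
  have hgd : ∀ t : ℝ, HasDerivAt g (g' t) t := fun t => aux_line_deriv hgrad x d t
  have hFcont : Continuous fun t : ℝ => F' (x + t • d) := by
    have : LipschitzWith (Real.toNNReal (L * ‖d‖)) (fun t : ℝ => F' (x + t • d)) := by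
      apply LipschitzWith.of_dist_le_mul
      intro a b
      have h1 : dist (F' (x + a • d)) (F' (x + b • d)) ≤ L * ‖(x + a • d) - (x + b • d)‖ := by
        rw [dist_eq_norm]; exact hlip _ _
      have h2 : (x + a • d) - (x + b • d) = (a - b) • d := by module
      rw [h2, norm_smul] at h1
      rw [Real.coe_toNNReal _ (by positivity)]
      calc dist (F' (x + a • d)) (F' (x + b • d)) ≤ L * (‖a - b‖ * ‖d‖) := h1
        _ = L * ‖d‖ * dist a b := by rw [dist_eq_norm, Real.norm_eq_abs]; ring
    exact this.continuous
  have hg'cont : Continuous g' := hFcont.inner continuous_const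
  have hftc : ∫ t in (0:ℝ)..1, g' t = g 1 - g 0 :=
    intervalIntegral.integral_eq_sub_of_hasDerivAt (fun t _ => hgd t)
      (hg'cont.intervalIntegrable 0 1)
  have hbound : ∀ t ∈ Set.Icc (0:ℝ) 1, g' t ≤ ⟪F' x, d⟫ + L * ‖d‖ ^ 2 * t := by
    intro t ht
    have h1 : g' t - ⟪F' x, d⟫ = ⟪F' (x + t • d) - F' x, d⟫ := by
      rw [inner_sub_left]
    have h2 : ⟪F' (x + t • d) - F' x, d⟫ ≤ ‖F' (x + t • d) - F' x‖ * ‖d‖ :=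
      real_inner_le_norm _ _
    have h3 : ‖F' (x + t • d) - F' x‖ ≤ L * ‖t • d‖ := by
      have := hlip (x + t • d) x
      simpa using this
    have h4 : ‖t • d‖ = t * ‖d‖ := by
      rw [norm_smul, Real.norm_eq_abs, abs_of_nonneg ht.1]
    have h5 := mul_le_mul_of_nonneg_right h3 (norm_nonneg d)
    rw [h4] at h5
    nlinarith [h5]
  have hint : ∫ t in (0:ℝ)..1, g' t ≤ ∫ t in (0:ℝ)..1, (⟪F' x, d⟫ + L * ‖d‖ ^ 2 * t) := by
    apply intervalIntegral.integral_mono_on (by norm_num)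
      (hg'cont.intervalIntegrable 0 1)
      (((continuous_const.add (continuous_const.mul continuous_id)).intervalIntegrable 0 1))
    exact hbound
  have hrhs : ∫ t in (0:ℝ)..1, (⟪F' x, d⟫ + L * ‖d‖ ^ 2 * t) = ⟪F' x, d⟫ + L / 2 * ‖d‖ ^ 2 := by
    have hi2 : IntervalIntegrable (fun t : ℝ => L * ‖d‖ ^ 2 * t) MeasureTheory.volume 0 1 :=
      (continuous_const.mul continuous_id).intervalIntegrable 0 1
    rw [intervalIntegral.integral_add intervalIntegrable_const hi2,
      intervalIntegral.integral_const, intervalIntegral.integral_const_mul,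
      integral_id]
    norm_num
    ring
  have hg0 : g 0 = F x := by simp [hg]
  have hg1 : g 1 = F y := by simp [hg, hd]
  rw [hftc, hg0, hg1, hrhs] at hint
  linarith [hint]

/-- One-sided strong bound. -/
lemma aux_strong {F : E → ℝ} {F' : E → E} (hconv : ConvexOn ℝ Set.univ F)
    (hgrad : ∀ x, HasGradientAt F (F' x) x)
    {L : ℝ} (hL : 0 < L) (hlip : ∀ u v, ‖F' u - F' v‖ ≤ L * ‖u - v‖) (x y : E) :
    F x + ⟪F' x, y - x⟫ + 1 / (2 * L) * ‖F' y - F' x‖ ^ 2 ≤ F y := by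
  set h := F' y - F' x with hh
  set z := y - L⁻¹ • h with hz
  have hB := aux_convex_lb hconv hgrad x z
  have hA := aux_descent hgrad hL hlip y z
  have hzx : z - x = (y - x) - L⁻¹ • h := by rw [hz]; abel
  have hzy : z - y = -(L⁻¹ • h) := by rw [hz]; abel
  set p := ⟪F' x, y - x⟫ with hp
  set q := ⟪F' x, h⟫ with hq
  set r := ⟪F' y, h⟫ with hr
  set N := ‖h‖ ^ 2 with hN
  have hB' : F x + (p - L⁻¹ * q) ≤ F z := by
    have : ⟪F' x, z - x⟫ = p - L⁻¹ * q := by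
      rw [hzx, inner_sub_right, real_inner_smul_right]
    linarith [hB, this.symm.le, this.le]
  have hA' : F z ≤ F y + (-(L⁻¹ * r)) + L / 2 * ((L⁻¹) ^ 2 * N) := by
    have h1 : ⟪F' y, z - y⟫ = -(L⁻¹ * r) := by
      rw [hzy, inner_neg_right, real_inner_smul_right]
    have h2 : ‖z - y‖ ^ 2 = (L⁻¹) ^ 2 * N := by
      rw [hzy, norm_neg, norm_smul, Real.norm_eq_abs, abs_of_pos (inv_pos.mpr hL), mul_pow, hN]
    calc F z ≤ F y + ⟪F' y, z - y⟫ + L / 2 * ‖z - y‖ ^ 2 := hA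
      _ = F y + (-(L⁻¹ * r)) + L / 2 * ((L⁻¹) ^ 2 * N) := by rw [h1, h2]
  have e1 : L / 2 * ((L⁻¹) ^ 2 * N) = L⁻¹ * N / 2 := by
    field_simp
  have e2 : L⁻¹ * r - L⁻¹ * q = L⁻¹ * N := by
    rw [← mul_sub]
    congr 1
    rw [hr, hq, ← inner_sub_left, hN, real_inner_self_eq_norm_sq]
  have e3 : 1 / (2 * L) * N = L⁻¹ * N / 2 := by
    rw [one_div, mul_inv_rev]; ring
  rw [e3]
  linarith [hB', hA', e1, e2]

/-- Cocoercivity (Baillon–Haddad). -/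
lemma aux_coco {F : E → ℝ} {F' : E → E} (hconv : ConvexOn ℝ Set.univ F)
    (hgrad : ∀ x, HasGradientAt F (F' x) x)
    {L : ℝ} (hL : 0 < L) (hlip : ∀ u v, ‖F' u - F' v‖ ≤ L * ‖u - v‖) (u v : E) :
    ‖F' u - F' v‖ ^ 2 ≤ L * ⟪F' u - F' v, u - v⟫ := by
  have h1 := aux_strong hconv hgrad hL hlip v u
  have h2 := aux_strong hconv hgrad hL hlip u v
  have hn : ‖F' v - F' u‖ = ‖F' u - F' v‖ := by rw [← norm_neg]; congr 1; abel
  rw [hn] at h2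
  have e : 1 / L * ‖F' u - F' v‖ ^ 2 = 2 * (1 / (2 * L) * ‖F' u - F' v‖ ^ 2) := by
    rw [one_div, one_div, mul_inv_rev]; ring
  have hsum : ⟪F' v, u - v⟫ + ⟪F' u, v - u⟫ + 1 / L * ‖F' u - F' v‖ ^ 2 ≤ 0 := by
    rw [e]; linarith [h1, h2]
  have hinner : ⟪F' v, u - v⟫ + ⟪F' u, v - u⟫ = -⟪F' u - F' v, u - v⟫ := by
    have : (v : E) - u = -(u - v) := by abel
    rw [this, inner_neg_right, inner_sub_left]
    ring
  rw [hinner] at hsum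
  have : 1 / L * ‖F' u - F' v‖ ^ 2 ≤ ⟪F' u - F' v, u - v⟫ := by linarith
  calc ‖F' u - F' v‖ ^ 2 = L * (1 / L * ‖F' u - F' v‖ ^ 2) := by field_simp
    _ ≤ L * ⟪F' u - F' v, u - v⟫ := by
        exact mul_le_mul_of_nonneg_left this hL.le

/-- Key algebraic step. -/
lemma aux_key {E : Type*} [NormedAddCommGroup E] [InnerProductSpace ℝ E]
    (S : E →ₗ[ℝ] E) (hsymm : ∀ x y, ⟪S x, y⟫ = ⟪x, S y⟫)
    {lmin L s : ℝ} (hlmin : 0 < lmin) (hL : 0 < L) (hs : 0 < s) (hs2 : s ≤ 2 * lmin / L)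
    (d w g : E) (hSw : S w = g) (hcoco : ‖g‖ ^ 2 ≤ L * ⟪g, d⟫)
    (hminw : lmin * ‖w‖ ^ 2 ≤ ⟪S w, w⟫) :
    ⟪S (d - s • w), d - s • w⟫ ≤ ⟪S d, d⟫ := by
  have hgw_cs : ⟪g, w⟫ ≤ ‖g‖ * ‖w‖ := real_inner_le_norm _ _
  have hgw_lb : lmin * ‖w‖ ^ 2 ≤ ⟪g, w⟫ := by rwa [hSw] at hminw
  have hgd_nonneg : (0:ℝ) ≤ ⟪g, d⟫ := by nlinarith [sq_nonneg ‖g‖]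
  have hn : lmin * ‖w‖ ≤ ‖g‖ := by
    rcases eq_or_ne w 0 with h0 | h0
    · simp [h0, norm_nonneg]
    · have hwpos : 0 < ‖w‖ := norm_pos_iff.mpr h0
      nlinarith
  have hml : lmin * ⟪g, w⟫ ≤ L * ⟪g, d⟫ := by
    nlinarith [mul_le_mul_of_nonneg_left hgw_cs hlmin.le,
      mul_le_mul_of_nonneg_left hn (norm_nonneg g), norm_nonneg w]
  have hs2' : s * L ≤ 2 * lmin := (le_div_iff₀ hL).mp hs2
  have key : s * ⟪g, w⟫ ≤ 2 * ⟪g, d⟫ := by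
    rcases le_or_gt ⟪g, w⟫ 0 with hle | hpos'
    · nlinarith
    · nlinarith [mul_le_mul_of_nonneg_right hs2' hpos'.le]
  have expand : ⟪S (d - s • w), d - s • w⟫ = ⟪S d, d⟫ - 2 * s * ⟪g, d⟫ + s ^ 2 * ⟪g, w⟫ := by
    have h1 : S (d - s • w) = S d - s • g := by rw [map_sub, map_smul, hSw]
    have hsym' : ⟪S d, w⟫ = ⟪g, d⟫ := by
      rw [hsymm d w, hSw]
      exact real_inner_comm _ _
    rw [h1, inner_sub_left, inner_sub_right, inner_sub_right, real_inner_smul_left,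
      real_inner_smul_left, real_inner_smul_right, real_inner_smul_right, hsym']
    ring
  rw [expand]
  nlinarith [mul_le_mul_of_nonneg_left key hs.le]

end aux

/-- The operator `x ↦ x - s S⁻¹∇F(x)` is non-expansive in the `S`-norm when `F` is
convex with `L`-Lipschitz gradient and `0 < s ≤ 2 λ_min(S)/L` (stated with squared norms). -/
theorem stmt_7 {n : ℕ}
    (F : EuclideanSpace ℝ (Fin n) → ℝ) (F' : EuclideanSpace ℝ (Fin n) → EuclideanSpace ℝ (Fin n))
    (hconv : ConvexOn ℝ Set.univ F)
    (hgrad : ∀ x, HasGradientAt F (F' x) x)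
    (L : ℝ) (hL : 0 < L) (hlip : ∀ u v, ‖F' u - F' v‖ ≤ L * ‖u - v‖)
    (S Sinv : EuclideanSpace ℝ (Fin n) →ₗ[ℝ] EuclideanSpace ℝ (Fin n))
    (hsymm : ∀ x y, ⟪S x, y⟫ = ⟪x, S y⟫)
    (hpos : ∀ x, x ≠ 0 → 0 < ⟪S x, x⟫)
    (hSinv : ∀ x, S (Sinv x) = x)
    (lmin : ℝ) (hlmin : 0 < lmin)
    (hmin : ∀ x, lmin * ‖x‖ ^ 2 ≤ ⟪S x, x⟫)
    (s : ℝ) (hs : 0 < s) (hs2 : s ≤ 2 * lmin / L) :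
    ∀ u v,
      ⟪S ((u - v) - s • (Sinv (F' u) - Sinv (F' v))),
          (u - v) - s • (Sinv (F' u) - Sinv (F' v))⟫ ≤
        ⟪S (u - v), u - v⟫ := by
  intro u v
  exact aux_key S hsymm hlmin hL hs hs2 (u - v) _ (F' u - F' v)
    (by rw [map_sub, hSinv, hSinv]) (aux_coco hconv hgrad hL hlip u v) (hmin _)
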